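/- Let A be an m×n matrix over a field F, B an m'×n matrix, C an m'×n' matrix, and I the set of indices of non-zero columns of B. Let F(A) be the set of frozen indices of A, i.e., indices i such that {i} is a relation of A. Let B* be obtained from B by replacing, for each i ∈ I ∩ F(A), the i-th column of B by zero. If I \ F(A) is not a relation of A, then nul([[A,0],[B,C]]) − nul(A) = n' − rank([B* C]). -/

import Mathlib

open scoped Classical

/-- `I` is a relation of `A`. -/
def IsRelation {F : Type*} [Field F] {m n : Type*} [Fintype m]
    (A : Matrix m n F) (I : Set n) : Prop :=
  ∃ y : m → F, (Function.support (Matrix.vecMul y A)).Nonempty ∧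
    Function.support (Matrix.vecMul y A) ⊆ I

/-- The set of frozen indices of `A`: those `i` with `{i}` a relation of `A`. -/
def frozen {F : Type*} [Field F] {m n : Type*} [Fintype m]
    (A : Matrix m n F) : Set n :=
  {i | IsRelation A {i}}

/-- Nullity of a matrix. -/
noncomputable def nullity {F : Type*} [Field F] {m n : Type*} [Fintype m] [Fintype n]
    (A : Matrix m n F) : ℕ :=
  Module.finrank F (LinearMap.ker A.mulVecLin)

open Matrix

section aux

variable {F : Type*} [Field F]

/-- Any functional on `Fin k → F` is dot product with a fixed vector. -/
lemma aux_dot {k : ℕ} (h : (Fin k → F) →ₗ[F] F) (u : Fin k → F) :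
    h u = (fun i => h (fun j => if i = j then 1 else 0)) ⬝ᵥ u := by
  rw [LinearMap.pi_apply_eq_sum_univ h u, dotProduct]
  exact Finset.sum_congr rfl fun i _ => by simp [mul_comm]

lemma aux_dot_ext {k : ℕ} {v w : Fin k → F} (h : ∀ x, v ⬝ᵥ x = w ⬝ᵥ x) : v = w := by
  funext j
  have := h (Pi.single j 1)
  simpa [dotProduct_single] using this

/-- A vector vanishing on the kernel of `A` lies in the row space of `A`. -/
lemma exists_vecMul_of_ker {m n : ℕ} (A : Matrix (Fin m) (Fin n) F) (w : Fin n → F)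
    (hw : ∀ x, A.mulVec x = 0 → w ⬝ᵥ x = 0) :
    ∃ z : Fin m → F, Matrix.vecMul z A = w := by
  classical
  set T := A.mulVecLin with hT
  let f : (Fin n → F) →ₗ[F] F :=
    { toFun := fun x => w ⬝ᵥ x
      map_add' := fun x y => dotProduct_add w x y
      map_smul' := fun c x => by simp [dotProduct_smul] }
  have hle : LinearMap.ker T ≤ LinearMap.ker f := by
    intro x hx
    simp only [LinearMap.mem_ker, hT, Matrix.mulVecLin_apply] at hx
    simpa [f, LinearMap.mem_ker] using hw x hx
  obtain ⟨h, hh⟩ := LinearMap.exists_extend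
    (((LinearMap.ker T).liftQ f hle) ∘ₗ T.quotKerEquivRange.symm.toLinearMap)
  have key : ∀ x, h (A.mulVec x) = w ⬝ᵥ x := by
    intro x
    have hx : T x ∈ LinearMap.range T := LinearMap.mem_range_self T x
    have h1 := LinearMap.congr_fun hh ⟨T x, hx⟩
    simp only [LinearMap.comp_apply, Submodule.coe_subtype, LinearEquiv.coe_coe,
      LinearEquiv.coe_toLinearMap] at h1
    rw [LinearMap.quotKerEquivRange_symm_apply_image] at h1
    have : Submodule.liftQ (LinearMap.ker T) f hle ((LinearMap.ker T).mkQ x) = f x :=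
      Submodule.liftQ_apply _ f x
    rw [this] at h1
    simpa [hT, Matrix.mulVecLin_apply, f] using h1
  set y : Fin m → F := fun i => h (fun j => if i = j then 1 else 0) with hy
  refine ⟨y, aux_dot_ext fun x => ?_⟩
  rw [← Matrix.dotProduct_mulVec, ← aux_dot h (A.mulVec x), key]

/-- Coordinates at frozen indices vanish on the kernel. -/
lemma frozen_coord_zero {m n : ℕ} (A : Matrix (Fin m) (Fin n) F) {x : Fin n → F}
    (hx : A.mulVec x = 0) {j : Fin n} (hj : j ∈ frozen A) : x j = 0 := by
  obtain ⟨y, ⟨i0, hi0⟩, hsupp⟩ := hj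
  have hij : ∀ i, i ≠ j → Matrix.vecMul y A i = 0 := by
    intro i hi
    by_contra hne
    exact hi (hsupp hne)
  have hc : Matrix.vecMul y A i0 ≠ 0 := hi0
  have hi0j : i0 = j := hsupp hi0
  subst hi0j
  have hdot : Matrix.vecMul y A ⬝ᵥ x = 0 := by
    rw [← Matrix.dotProduct_mulVec, hx, dotProduct_zero]
  have : Matrix.vecMul y A ⬝ᵥ x = Matrix.vecMul y A i0 * x i0 := by
    rw [dotProduct]
    rw [Finset.sum_eq_single i0]
    · intro b _ hb; rw [hij b hb, zero_mul]
    · intro hb; exact absurd (Finset.mem_univ i0) hb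
  rw [this] at hdot
  exact (mul_eq_zero.mp hdot).resolve_left hc

end aux

set_option maxHeartbeats 1000000 in
set_option synthInstance.maxHeartbeats 500000 in
theorem stmt_1 {F : Type*} [Field F] {m n m' n' : ℕ}
    (A : Matrix (Fin m) (Fin n) F) (B : Matrix (Fin m') (Fin n) F)
    (C : Matrix (Fin m') (Fin n') F)
    (I : Set (Fin n)) (hI : I = {j | ∃ i, B i j ≠ 0})
    (Bstar : Matrix (Fin m') (Fin n) F)
    (hBstar : ∀ i j, Bstar i j = if j ∈ I ∩ frozen A then 0 else B i j)
    (hrel : ¬ IsRelation A (I \ frozen A)) :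
    (nullity (Matrix.fromBlocks A 0 B C) : ℤ) - nullity A
      = (n' : ℤ) - (Matrix.fromCols Bstar C).rank := by
  classical
  -- columns of Bstar outside I \ frozen A vanish
  have hcol : ∀ j : Fin n, j ∉ I \ frozen A → ∀ i, Bstar i j = 0 := by
    intro j hj i
    rw [hBstar]
    by_cases hjI : j ∈ I
    · have hjf : j ∈ frozen A := by
        by_contra hjf
        exact hj ⟨hjI, hjf⟩
      simp [hjI, hjf]
    · have hB0 : B i j = 0 := by
        by_contra hB
        exact hjI (hI ▸ ⟨i, hB⟩)
      simp [hjI, hB0]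
  -- B and Bstar agree on the kernel of A
  have hBB : ∀ x : Fin n → F, A.mulVec x = 0 → B.mulVec x = Bstar.mulVec x := by
    intro x hx
    funext i
    unfold Matrix.mulVec dotProduct
    refine Finset.sum_congr rfl fun j _ => ?_
    show B i j * x j = Bstar i j * x j
    rw [hBstar]
    by_cases hjf : j ∈ I ∩ frozen A
    · rw [if_pos hjf, frozen_coord_zero A hx hjf.2, mul_zero, mul_zero]
    · rw [if_neg hjf]
  -- main surjectivity: the range of Bstar is achieved on ker A
  have hsurj : ∀ v : Fin n → F, ∃ x : Fin n → F, A.mulVec x = 0 ∧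
      Bstar.mulVec x = Bstar.mulVec v := by
    intro v
    by_contra hcon
    push_neg at hcon
    set W : Submodule F (Fin m' → F) :=
      Submodule.map Bstar.mulVecLin (LinearMap.ker A.mulVecLin) with hW
    have hnmem : Bstar.mulVec v ∉ W := by
      rintro ⟨x, hx, hxv⟩
      simp only [LinearMap.mem_ker, Matrix.mulVecLin_apply] at hx hxv
      exact hcon x hx hxv
    obtain ⟨g, hgv, hg0⟩ := W.exists_dual_map_eq_bot_of_notMem hnmem inferInstance
    set y : Fin m' → F := fun i => g (fun j => if i = j then 1 else 0) with hy
    have hgy : ∀ u, g u = y ⬝ᵥ u := fun u => aux_dot g u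
    set w : Fin n → F := Matrix.vecMul y Bstar with hw
    have hwker : ∀ x, A.mulVec x = 0 → w ⬝ᵥ x = 0 := by
      intro x hx
      have hmem : Bstar.mulVec x ∈ W :=
        ⟨x, by simpa [LinearMap.mem_ker, Matrix.mulVecLin_apply] using hx, rfl⟩
      have h0 : g (Bstar.mulVec x) = 0 := by
        have := hg0 ▸ Submodule.mem_map_of_mem (f := g) hmem
        exact (Submodule.mem_bot F).mp this
      rw [hgy] at h0
      rw [hw, ← Matrix.dotProduct_mulVec]
      exact h0
    obtain ⟨z, hz⟩ := exists_vecMul_of_ker A w hwker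
    apply hrel
    refine ⟨z, ?_, ?_⟩
    · -- support nonempty since g (Bstar v) ≠ 0
      have : w ⬝ᵥ v ≠ 0 := by
        rw [hw, ← Matrix.dotProduct_mulVec, ← hgy]
        exact hgv
      rcases eq_or_ne (Matrix.vecMul z A) 0 with h0 | h0
      · rw [hz] at h0
        rw [h0] at this
        simp at this
      · exact Function.support_nonempty_iff.mpr h0
    · intro j hj
      rw [Function.mem_support, hz] at hj
      by_contra hjn
      apply hj
      rw [hw]
      unfold Matrix.vecMul dotProduct
      refine Finset.sum_eq_zero fun i _ => ?_
      show y i * Bstar i j = 0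
      rw [hcol j hjn i, mul_zero]
  -- set up rank-nullity
  set T := A.mulVecLin with hT
  set KT := LinearMap.ker T with hKT
  set L := (Matrix.fromCols Bstar C).mulVecLin with hL
  set M := Matrix.fromBlocks A 0 B C with hM
  set Φ : (KT × (Fin n' → F)) →ₗ[F] (Fin m' → F) :=
    Bstar.mulVecLin ∘ₗ KT.subtype ∘ₗ LinearMap.fst F KT (Fin n' → F)
      + C.mulVecLin ∘ₗ LinearMap.snd F KT (Fin n' → F) with hΦ
  have hΦapp : ∀ p : KT × (Fin n' → F), Φ p = Bstar.mulVec p.1 + C.mulVec p.2 := by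
    intro p; simp [hΦ, Matrix.mulVecLin_apply]
  -- range Φ = range L
  have hrange : LinearMap.range Φ = LinearMap.range L := by
    apply le_antisymm
    · rintro _ ⟨p, rfl⟩
      refine ⟨Sum.elim (p.1 : Fin n → F) p.2, ?_⟩
      rw [hL, Matrix.mulVecLin_apply, Matrix.fromCols_mulVec_sumElim, hΦapp]
    · rintro _ ⟨u, rfl⟩
      have hu : u = Sum.elim (u ∘ Sum.inl) (u ∘ Sum.inr) := by
        funext i; cases i <;> rfl
      obtain ⟨x, hx0, hxv⟩ := hsurj (u ∘ Sum.inl)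
      refine ⟨(⟨x, by
        rw [hKT, hT, LinearMap.mem_ker, Matrix.mulVecLin_apply]; exact hx0⟩,
        u ∘ Sum.inr), ?_⟩
      rw [hΦapp]
      show Bstar.mulVec x + C.mulVec (u ∘ Sum.inr) = (Matrix.fromCols Bstar C).mulVecLin u
      have h2 : (Matrix.fromCols Bstar C).mulVecLin u
          = Bstar.mulVec (u ∘ Sum.inl) + C.mulVec (u ∘ Sum.inr) := by
        rw [Matrix.mulVecLin_apply]
        conv_lhs => rw [hu]
        rw [Matrix.fromCols_mulVec_sumElim]
      rw [h2, hxv]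
  -- ker Φ ≃ ker M
  have hMv : ∀ v : Fin n ⊕ Fin n' → F, M.mulVec v =
      Sum.elim (A.mulVec (v ∘ Sum.inl)) (B.mulVec (v ∘ Sum.inl) + C.mulVec (v ∘ Sum.inr)) := by
    intro v
    rw [hM, Matrix.fromBlocks_mulVec]
    simp
  have e : LinearMap.ker Φ ≃ₗ[F] LinearMap.ker M.mulVecLin :=
    { toFun := fun p => ⟨Sum.elim (p.1.1 : Fin n → F) p.1.2, by
        have hx : A.mulVec (p.1.1 : Fin n → F) = 0 := by
          have h := LinearMap.mem_ker.mp p.1.1.2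
          simp only [hT, Matrix.mulVecLin_apply] at h
          exact h
        have hker : Φ p.1 = 0 := p.2
        rw [hΦapp] at hker
        rw [LinearMap.mem_ker, Matrix.mulVecLin_apply, hMv]
        have h1 : (Sum.elim (p.1.1 : Fin n → F) p.1.2) ∘ Sum.inl = (p.1.1 : Fin n → F) := rfl
        have h2 : (Sum.elim (p.1.1 : Fin n → F) p.1.2) ∘ Sum.inr = p.1.2 := rfl
        rw [h1, h2, hx, hBB _ hx, hker]
        funext i; cases i <;> rfl⟩
      invFun := fun q => ⟨(⟨(q.1 : Fin n ⊕ Fin n' → F) ∘ Sum.inl, by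
          have hq : M.mulVec q.1 = 0 := by
            have h := LinearMap.mem_ker.mp q.2
            simp only [Matrix.mulVecLin_apply] at h
            exact h
          rw [hMv] at hq
          have := congrFun hq
          simp only [hKT, hT, LinearMap.mem_ker, Matrix.mulVecLin_apply]
          funext i
          simpa using this (Sum.inl i)⟩,
          (q.1 : Fin n ⊕ Fin n' → F) ∘ Sum.inr), by
          have hq : M.mulVec q.1 = 0 := by
            have h := LinearMap.mem_ker.mp q.2
            simp only [Matrix.mulVecLin_apply] at h
            exact h
          rw [hMv] at hq
          have hx : A.mulVec ((q.1 : Fin n ⊕ Fin n' → F) ∘ Sum.inl) = 0 := by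
            funext i; simpa using congrFun hq (Sum.inl i)
          have hz : B.mulVec ((q.1 : Fin n ⊕ Fin n' → F) ∘ Sum.inl)
              + C.mulVec ((q.1 : Fin n ⊕ Fin n' → F) ∘ Sum.inr) = 0 := by
            funext i; simpa using congrFun hq (Sum.inr i)
          rw [LinearMap.mem_ker, hΦapp]
          simpa [← hBB _ hx] using hz⟩
      left_inv := by
        rintro ⟨⟨⟨x, hx⟩, z⟩, hp⟩
        ext <;> rfl
      right_inv := by
        rintro ⟨v, hv⟩
        ext i
        cases i <;> rfl
      map_add' := by
        rintro ⟨⟨⟨x, hx⟩, z⟩, hp⟩ ⟨⟨⟨x', hx'⟩, z'⟩, hp'⟩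
        ext i
        cases i <;> rfl
      map_smul' := by
        rintro c ⟨⟨⟨x, hx⟩, z⟩, hp⟩
        ext i
        cases i <;> rfl }
  -- rank-nullity
  have hrn := LinearMap.finrank_range_add_finrank_ker Φ
  have hdom : Module.finrank F (KT × (Fin n' → F)) = nullity A + n' := by
    rw [Module.finrank_prod, Module.finrank_pi]
    simp [nullity, hKT, hT]
    rfl
  have hkerM : Module.finrank F (LinearMap.ker Φ) = nullity M := by
    rw [nullity]
    exact e.finrank_eq
  have hrank : Module.finrank F (LinearMap.range Φ) = (Matrix.fromCols Bstar C).rank := by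
    rw [hrange, Matrix.rank, hL]
  rw [hdom, hkerM, hrank] at hrn
  omega
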